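/- Differentiability and invertibility of the characteristic map (Lemma 3.1). Let L_G, L_ξ > 0 and set t⋆ = (L_G L_ξ)^{-1}. Assume: (i) ξ : ℝ^{D×D} → ℝ is C² and ∇ξ is L_ξ-Lipschitz on B; (ii) G : Q_∞ → Q_{∞,≤1} is L_G-Lipschitz for the L^∞ norm and is Fréchet differentiable at every q ∈ Q_∞ (as a map into L^∞) with derivative DG(q) a bounded linear operator on L^∞ satisfying ‖DG(q)‖_{Op(L^∞;L^∞)} ≤ L_G. Define X : ℝ_+ × Q_∞ → L^∞ by X(t,q) = q − t ∇ξ(G(q)), where ∇ξ(G(q)) is the path s ↦ ∇ξ(G(q)(s)). Then for every t ≥ 0 the map X(t,·) is Fréchet differentiable at every q ∈ Q_∞ with derivative the bounded operator ∇X(t,q) on L^∞ given by (∇X(t,q)κ)(s) = κ(s) − t ∇²ξ(G(q)(s)) ((DG(q)κ)(s)); moreover ‖I − ∇X(t,q)‖_{Op(L^∞;L^∞)} ≤ t/t⋆, and if t < t⋆ then ∇X(t,q) is a linear bijection of L^∞ onto itself. -/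

import Mathlib

noncomputable section

open MeasureTheory Set Filter Topology RealInnerProductSpace

/-- `D×D` real matrices with the Frobenius (Euclidean) norm. -/
abbrev Mat (D : ℕ) : Type := EuclideanSpace ℝ (Fin D × Fin D)

/-- symmetric positive semidefinite matrices -/
def Mat.PSD {D : ℕ} (a : Mat D) : Prop :=
  (∀ i j : Fin D, a (i, j) = a (j, i)) ∧
    ∀ v : Fin D → ℝ, 0 ≤ ∑ i, ∑ j, v i * a (i, j) * v j

/-- the unit interval `[0,1)` as a type -/
abbrev UI : Type := Set.Ico (0 : ℝ) 1

abbrev SPath (D : ℕ) : Type := UI → Mat D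

/-- Lebesgue measure on `[0,1)` -/
instance : MeasureSpace UI := ⟨(volume : Measure ℝ).comap Subtype.val⟩

/-- càdlàg increasing `S^D_+`-valued path, i.e. a member of `Q` -/
def IsQ {D : ℕ} (p : SPath D) : Prop :=
  (∀ s, Mat.PSD (p s)) ∧
  (∀ s t : UI, s ≤ t → Mat.PSD (p t - p s)) ∧
  (∀ s : UI, ContinuousWithinAt p (Set.Ici s) s) ∧
  (∀ s : UI, (0 : ℝ) < (s : ℝ) →
    ∃ L : Mat D, Tendsto p (nhdsWithin s (Set.Iio s)) (nhds L))

/-- `L^∞` norm (sup norm on `[0,1)`) -/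
def supN {D : ℕ} (p : SPath D) : ℝ := sSup (Set.range fun s => ‖p s‖)

/-- bounded path, i.e. member of `L^∞` -/
def Bdd {D : ℕ} (p : SPath D) : Prop := BddAbove (Set.range fun s => ‖p s‖)

/-- `L¹` norm -/
def L1N {D : ℕ} (p : SPath D) : ℝ := ∫ s, ‖p s‖

/-- `L²` norm -/
def L2N {D : ℕ} (p : SPath D) : ℝ := Real.sqrt (∫ s, ‖p s‖ ^ 2)

/-- `L²` inner product -/
def L2I {D : ℕ} (p q : SPath D) : ℝ := ∫ s, ⟪p s, q s⟫

def Qinf (D : ℕ) : Set (SPath D) := {p | IsQ p ∧ Bdd p}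

def Qle1 (D : ℕ) : Set (SPath D) := {p | IsQ p ∧ ∀ s, ‖p s‖ ≤ 1}

def Q1 (D : ℕ) : Set (SPath D) := {p | IsQ p ∧ Integrable fun s => ‖p s‖}

def Q2 (D : ℕ) : Set (SPath D) := {p | IsQ p ∧ Integrable fun s => ‖p s‖ ^ 2}

/-- the path `s ↦ ∇ξ(p(s))` -/
def gradPath {D : ℕ} (ξ : Mat D → ℝ) (p : SPath D) : SPath D := fun s => gradient ξ (p s)

/-- `θ(a) = a·∇ξ(a) − ξ(a)` -/
def theta {D : ℕ} (ξ : Mat D → ℝ) (a : Mat D) : ℝ := ⟪a, gradient ξ a⟫ - ξ a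

/-- `∇ξ` is `L`-Lipschitz on the unit ball `B` -/
def LipOnB {D : ℕ} (ξ : Mat D → ℝ) (L : ℝ) : Prop :=
  ∀ a b : Mat D, ‖a‖ ≤ 1 → ‖b‖ ≤ 1 → ‖gradient ξ a - gradient ξ b‖ ≤ L * ‖a - b‖


section AuxLemmas

instance : Nonempty UI := ⟨⟨0, by constructor <;> norm_num⟩⟩

lemma bdd_of_le {D : ℕ} {p : SPath D} {C : ℝ} (h : ∀ s, ‖p s‖ ≤ C) : Bdd p :=
  ⟨C, by rintro x ⟨s, rfl⟩; exact h s⟩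

lemma le_supN {D : ℕ} {p : SPath D} (hp : Bdd p) (s : UI) : ‖p s‖ ≤ supN p :=
  le_csSup hp ⟨s, rfl⟩

lemma supN_le {D : ℕ} {p : SPath D} {C : ℝ} (h : ∀ s, ‖p s‖ ≤ C) : supN p ≤ C :=
  csSup_le (Set.range_nonempty _) (by rintro x ⟨s, rfl⟩; exact h s)

lemma supN_nonneg {D : ℕ} {p : SPath D} (hp : Bdd p) : 0 ≤ supN p :=
  le_trans (norm_nonneg _) (le_supN hp (Classical.arbitrary UI))

lemma bdd_sub {D : ℕ} {p q : SPath D} (hp : Bdd p) (hq : Bdd q) : Bdd (p - q) := by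
  obtain ⟨C, hC⟩ := hp
  obtain ⟨C', hC'⟩ := hq
  refine bdd_of_le (C := C + C') fun s => ?_
  have h1 : ‖p s‖ ≤ C := hC ⟨s, rfl⟩
  have h2 : ‖q s‖ ≤ C' := hC' ⟨s, rfl⟩
  calc ‖(p - q) s‖ = ‖p s - q s‖ := rfl
    _ ≤ ‖p s‖ + ‖q s‖ := norm_sub_le _ _
    _ ≤ C + C' := add_le_add h1 h2

/-- Neumann-series invertibility of `κ ↦ κ - A κ` on bounded paths, for additive `A` with
sup-norm bound `c < 1`. -/
lemma neumann {D : ℕ} (A : SPath D → SPath D) (c : ℝ) (hc0 : 0 ≤ c) (hc : c < 1)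
    (hAsub : ∀ κ κ' : SPath D, A (κ - κ') = A κ - A κ')
    (hA : ∀ κ : SPath D, Bdd κ → Bdd (A κ) ∧ supN (A κ) ≤ c * supN κ) :
    Set.BijOn (fun κ : SPath D => κ - A κ) {κ : SPath D | Bdd κ} {κ : SPath D | Bdd κ} := by
  have hA0 : A 0 = 0 := by have := hAsub 0 0; simpa using this
  have hAneg : ∀ κ, A (-κ) = -(A κ) := by
    intro κ; have := hAsub 0 κ; simpa [hA0] using this
  have hAadd : ∀ κ κ' : SPath D, A (κ + κ') = A κ + A κ' := by
    intro κ κ'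
    have h := hAsub κ (-κ')
    rw [sub_neg_eq_add, hAneg, sub_neg_eq_add] at h
    exact h
  have hAsum : ∀ (N : ℕ) (v : ℕ → SPath D),
      A (∑ n ∈ Finset.range N, v n) = ∑ n ∈ Finset.range N, A (v n) := by
    intro N v
    induction N with
    | zero => simpa using hA0
    | succ N ih => rw [Finset.sum_range_succ, hAadd, ih, Finset.sum_range_succ]
  refine ⟨fun κ hκ => ?_, fun κ hκ κ' hκ' heq => ?_, fun ρ hρ => ?_⟩
  · exact bdd_sub hκ (hA κ hκ).1
  · -- injectivity
    have hdb : Bdd (κ - κ') := bdd_sub hκ hκ'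
    have hdA : κ - κ' = A (κ - κ') := by
      have h0 : κ - A κ = κ' - A κ' := heq
      rw [sub_eq_sub_iff_sub_eq_sub] at h0
      rw [hAsub]
      exact h0
    have hsup : supN (κ - κ') ≤ c * supN (κ - κ') := by
      conv_lhs => rw [hdA]
      exact (hA _ hdb).2
    have hsup0 : supN (κ - κ') ≤ 0 := by nlinarith [supN_nonneg hdb]
    funext s
    have h1 : ‖(κ - κ') s‖ ≤ 0 := (le_supN hdb s).trans hsup0
    have h2 : κ s - κ' s = 0 := by simpa [norm_le_zero_iff] using h1
    exact sub_eq_zero.mp h2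
  · -- surjectivity
    have hρb : Bdd ρ := hρ
    set u : ℕ → SPath D := fun n => A^[n] ρ with hu
    have husucc : ∀ n, u (n + 1) = A (u n) := fun n => Function.iterate_succ_apply' A n ρ
    have hub : ∀ n, Bdd (u n) ∧ supN (u n) ≤ c ^ n * supN ρ := by
      intro n
      induction n with
      | zero => exact ⟨hρb, by simp [hu]⟩
      | succ n ih =>
        refine ⟨by rw [husucc]; exact (hA _ ih.1).1, ?_⟩
        calc supN (u (n + 1)) = supN (A (u n)) := by rw [husucc]
          _ ≤ c * supN (u n) := (hA _ ih.1).2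
          _ ≤ c * (c ^ n * supN ρ) := mul_le_mul_of_nonneg_left ih.2 hc0
          _ = c ^ (n + 1) * supN ρ := by ring
    have hpt : ∀ n s, ‖u n s‖ ≤ c ^ n * supN ρ := fun n s =>
      (le_supN (hub n).1 s).trans (hub n).2
    have hgeo : Summable (fun n : ℕ => c ^ n * supN ρ) :=
      (summable_geometric_of_lt_one hc0 hc).mul_right _
    have hsummN : ∀ s, Summable (fun n => u n s) := fun s =>
      Summable.of_norm_bounded hgeo (fun n => hpt n s)
    set κ : SPath D := fun s => ∑' n, u n s with hκdef
    set C₀ : ℝ := ∑' n : ℕ, c ^ n * supN ρ with hC₀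
    have hnormsum : ∀ s, Summable (fun n => ‖u n s‖) := fun s =>
      Summable.of_nonneg_of_le (fun n => norm_nonneg _) (fun n => hpt n s) hgeo
    have hκpt : ∀ s, ‖κ s‖ ≤ C₀ :=
      fun s => (norm_tsum_le_tsum_norm (hnormsum s)).trans
        (Summable.tsum_le_tsum (fun n => hpt n s) (hnormsum s) hgeo)
    have hκb : Bdd κ := bdd_of_le hκpt
    have hC₀0 : 0 ≤ C₀ := (norm_nonneg _).trans (hκpt (Classical.arbitrary UI))
    -- partial sums
    set S : ℕ → SPath D := fun N => ∑ n ∈ Finset.range N, u n with hS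
    have hSapp : ∀ N s, S N s = ∑ n ∈ Finset.range N, u n s := by
      intro N s; rw [hS]; simp
    have htail : ∀ (N : ℕ) (s : UI), ‖(κ - S N) s‖ ≤ c ^ N * C₀ := by
      intro N s
      have h1 : (κ - S N) s = ∑' n, u (n + N) s := by
        have h2 := Summable.sum_add_tsum_nat_add (f := fun n => u n s) N (hsummN s)
        have : κ s - S N s = ∑' (n : ℕ), u (n + N) s := by
          rw [sub_eq_iff_eq_add', hSapp]
          exact h2.symm
        exact this
      rw [h1]
      have hs1 : Summable (fun n => ‖u (n + N) s‖) :=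
        (summable_nat_add_iff (f := fun n => ‖u n s‖) N).mpr (hnormsum s)
      have hs2 : Summable (fun n : ℕ => c ^ N * (c ^ n * supN ρ)) := hgeo.mul_left _
      calc ‖∑' n, u (n + N) s‖ ≤ ∑' n, ‖u (n + N) s‖ :=
            norm_tsum_le_tsum_norm hs1
        _ ≤ ∑' n : ℕ, c ^ N * (c ^ n * supN ρ) := by
            refine Summable.tsum_le_tsum (fun n => ?_) hs1 hs2
            calc ‖u (n + N) s‖ ≤ c ^ (n + N) * supN ρ := hpt _ s
              _ = c ^ N * (c ^ n * supN ρ) := by rw [pow_add]; ring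
        _ = c ^ N * C₀ := by rw [tsum_mul_left, hC₀]
    have hSb : ∀ N, Bdd (S N) := by
      intro N
      refine bdd_of_le (C := (N : ℝ) * supN ρ) fun s => ?_
      calc ‖S N s‖ = ‖∑ n ∈ Finset.range N, u n s‖ := by rw [hSapp]
        _ ≤ ∑ n ∈ Finset.range N, ‖u n s‖ := norm_sum_le _ _
        _ ≤ ∑ n ∈ Finset.range N, (c ^ n * supN ρ) :=
            Finset.sum_le_sum fun n _ => hpt n s
        _ ≤ ∑ _n ∈ Finset.range N, supN ρ := by
            refine Finset.sum_le_sum fun n _ => ?_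
            nlinarith [pow_le_one₀ hc0 hc.le (n := n), supN_nonneg hρb, pow_nonneg hc0 n]
        _ = (N : ℝ) * supN ρ := by simp [Finset.sum_const, nsmul_eq_mul]
    have htailb : ∀ N, Bdd (κ - S N) := fun N => bdd_of_le (htail N)
    refine ⟨κ, hκb, ?_⟩
    funext s
    -- A (S N) s = partial sums of shifted series
    have hASN : ∀ N, A (S N) s = ∑ n ∈ Finset.range N, u (n + 1) s := by
      intro N
      rw [hS, hAsum]
      have : (∑ n ∈ Finset.range N, A (u n)) s = ∑ n ∈ Finset.range N, A (u n) s := by simp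
      rw [this]
      exact Finset.sum_congr rfl fun n _ => by rw [← husucc]
    -- A (S N) s → A κ s
    have hlim1 : Tendsto (fun N => A (S N) s) atTop (𝓝 (A κ s)) := by
      rw [tendsto_iff_norm_sub_tendsto_zero]
      have hb : ∀ N, ‖A (S N) s - A κ s‖ ≤ (c * C₀) * c ^ N := by
        intro N
        have h1 : A (S N) s - A κ s = -((A (κ - S N)) s) := by
          rw [hAsub]
          simp
        rw [h1, norm_neg]
        calc ‖A (κ - S N) s‖ ≤ supN (A (κ - S N)) :=
              le_supN (hA _ (htailb N)).1 s
          _ ≤ c * supN (κ - S N) := (hA _ (htailb N)).2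
          _ ≤ c * (c ^ N * C₀) :=
              mul_le_mul_of_nonneg_left (supN_le (htail N)) hc0
          _ = (c * C₀) * c ^ N := by ring
      have hlim0 : Tendsto (fun N : ℕ => (c * C₀) * c ^ N) atTop (𝓝 0) := by
        have := (tendsto_pow_atTop_nhds_zero_of_lt_one hc0 hc).const_mul (c * C₀)
        simpa using this
      exact squeeze_zero (fun N => norm_nonneg _) hb hlim0
    -- the shifted series is summable with partial sums A (S N) s
    have hs3 : Summable (fun n => u (n + 1) s) :=
      (summable_nat_add_iff (f := fun n => u n s) 1).mpr (hsummN s)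
    have hlim2 : Tendsto (fun N => ∑ n ∈ Finset.range N, u (n + 1) s) atTop
        (𝓝 (∑' n, u (n + 1) s)) := hs3.hasSum.tendsto_sum_nat
    have hA_eq : A κ s = ∑' n, u (n + 1) s := by
      refine tendsto_nhds_unique ?_ hlim2
      have : (fun N => A (S N) s) = fun N => ∑ n ∈ Finset.range N, u (n + 1) s :=
        funext hASN
      rw [← this]
      exact hlim1
    have hκs : κ s = ρ s + A κ s := by
      rw [hA_eq]
      have := Summable.tsum_eq_zero_add (f := fun n => u n s) (hsummN s)
      simpa [hu] using this
    show κ s - A κ s = ρ s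
    rw [hκs]; abel

lemma char_identity {E : Type*} [NormedAddCommGroup E] [NormedSpace ℝ E]
    (t : ℝ) (x y g g' u v fu fv : E) :
    (x - t • g') - (y - t • g) - ((x - y) - t • fv) =
    -(t • ((g' - g - fu) + (fu - fv))) := by
  simp only [smul_add, smul_sub]
  abel

end AuxLemmas

/-- Differentiability and invertibility of the characteristic map (Lemma 3.1).
Here `G` plays the role of `∇_q ψ(·;x)`, with `DG q` its Fréchet derivative at `q`, and
`X(t,q) = q − t∇ξ(G(q))` is the characteristic map.  Its Fréchet derivative at `q ∈ Q_∞`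
(within `Q_∞`, with respect to the `L^∞` norm) is the bounded operator
`κ ↦ (s ↦ κ(s) − t ∇²ξ(G(q)(s)) ((DG(q)κ)(s)))`; moreover `‖I − ∇X(t,q)‖ ≤ t/t⋆` and for
`t < t⋆` the operator `∇X(t,q)` is a bijection of `L^∞` (the bounded paths) onto itself. -/
theorem characteristic_map_differentiable_invertible
    {D : ℕ} (hD : 1 ≤ D) (L_G L_ξ : ℝ) (hLG : 0 < L_G) (hLξ : 0 < L_ξ)
    (ξ : Mat D → ℝ) (hξ : ContDiff ℝ 2 ξ) (hξLip : LipOnB ξ L_ξ)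
    (G : SPath D → SPath D) (hGmem : ∀ q ∈ Qinf D, G q ∈ Qle1 D)
    (hGLip : ∀ q ∈ Qinf D, ∀ q' ∈ Qinf D, supN (G q - G q') ≤ L_G * supN (q - q'))
    (DG : SPath D → SPath D →ₗ[ℝ] SPath D)
    (hDGbdd : ∀ q ∈ Qinf D, ∀ κ : SPath D, Bdd κ →
      Bdd (DG q κ) ∧ supN (DG q κ) ≤ L_G * supN κ)
    (hGdiff : ∀ q ∈ Qinf D, ∀ ε > 0, ∃ δ > 0, ∀ q' ∈ Qinf D, supN (q' - q) ≤ δ →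
      supN (G q' - G q - DG q (q' - q)) ≤ ε * supN (q' - q)) :
    ∀ t : ℝ, 0 ≤ t → ∀ q ∈ Qinf D,
      -- Fréchet differentiability of `X(t,·)` at `q` with the stated derivative
      (∀ ε > 0, ∃ δ > 0, ∀ q' ∈ Qinf D, supN (q' - q) ≤ δ →
        supN ((fun s => (q' s - t • gradient ξ (G q' s)) - (q s - t • gradient ξ (G q s)) -
            ((q' s - q s) - t • fderiv ℝ (gradient ξ) (G q s) (DG q (q' - q) s)) :
          SPath D)) ≤ ε * supN (q' - q)) ∧
      -- `∇X(t,q)` is a bounded operator on `L^∞` and `‖I − ∇X(t,q)‖_{Op} ≤ t/t⋆ = t L_G L_ξ`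
      (∀ κ : SPath D, Bdd κ →
        Bdd ((fun s => κ s - t • fderiv ℝ (gradient ξ) (G q s) (DG q κ s)) : SPath D) ∧
        supN ((fun s => t • fderiv ℝ (gradient ξ) (G q s) (DG q κ s)) : SPath D) ≤
          t * (L_G * L_ξ) * supN κ) ∧
      -- for `t < t⋆` the operator `∇X(t,q)` is a bijection of `L^∞` onto itself
      (t < (L_G * L_ξ)⁻¹ →
        Set.BijOn
          (fun κ : SPath D =>
            (fun s => κ s - t • fderiv ℝ (gradient ξ) (G q s) (DG q κ s) : SPath D))
          {κ : SPath D | Bdd κ} {κ : SPath D | Bdd κ}) := by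
  intro t ht q hq
  -- basic facts about the gradient
  have hg1 : ContDiff ℝ 1 (gradient ξ) := by
    have h2 : ContDiff ℝ 1 (fderiv ℝ ξ) := hξ.fderiv_right (le_refl 2)
    have h3 : gradient ξ =
        (fun y => (InnerProductSpace.toDual ℝ (Mat D)).symm y) ∘ (fderiv ℝ ξ) := rfl
    rw [h3]
    exact ((InnerProductSpace.toDual ℝ (Mat D)).symm.contDiff).comp h2
  have hdiffg : Differentiable ℝ (gradient ξ) := hg1.differentiable one_ne_zero
  have hHcont : Continuous (fun a : Mat D => fderiv ℝ (gradient ξ) a) :=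
    hg1.continuous_fderiv one_ne_zero
  -- operator-norm bound of the Hessian on the unit ball
  have hH : ∀ a : Mat D, ‖a‖ ≤ 1 → ‖fderiv ℝ (gradient ξ) a‖ ≤ L_ξ := by
    intro a ha
    have key : ∀ b : Mat D, ‖b‖ < 1 → ‖fderiv ℝ (gradient ξ) b‖ ≤ L_ξ := by
      intro b hb
      refine (hdiffg b).hasFDerivAt.le_of_lip' hLξ.le ?_
      filter_upwards [Metric.isOpen_ball.mem_nhds (mem_ball_zero_iff.2 hb)] with x hx
      exact hξLip x b (mem_ball_zero_iff.1 hx).le hb.le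
    have hc : Tendsto (fun n : ℕ => (1 - 1/(n+1 : ℝ))) atTop (𝓝 1) := by
      have h0 := tendsto_one_div_add_atTop_nhds_zero_nat (𝕜 := ℝ)
      have h := (tendsto_const_nhds (x := (1:ℝ)) (f := atTop (α := ℕ))).sub h0
      simpa using h
    have hsm : Tendsto (fun n : ℕ => (1 - 1/(n+1 : ℝ)) • a) atTop (𝓝 a) := by
      have := hc.smul_const a
      simpa using this
    have hT : Tendsto (fun n : ℕ => ‖fderiv ℝ (gradient ξ) ((1 - 1/(n+1:ℝ)) • a)‖) atTop
        (𝓝 ‖fderiv ℝ (gradient ξ) a‖) := ((hHcont.tendsto a).comp hsm).norm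
    refine le_of_tendsto hT (Filter.Eventually.of_forall fun n => key _ ?_)
    have h1 : (0:ℝ) < 1/((n:ℝ)+1) := by positivity
    have h2 : 1/((n:ℝ)+1) ≤ 1 := by
      rw [div_le_one (by positivity)]
      have hn : (0:ℝ) ≤ (n:ℝ) := Nat.cast_nonneg n
      linarith
    calc ‖(1 - 1/((n:ℝ)+1)) • a‖ = |1 - 1/((n:ℝ)+1)| * ‖a‖ := by
          rw [norm_smul, Real.norm_eq_abs]
      _ ≤ (1 - 1/((n:ℝ)+1)) * 1 := by
          rw [abs_of_nonneg (by linarith)]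
          exact mul_le_mul_of_nonneg_left ha (by linarith)
      _ < 1 := by linarith
  have hHapp : ∀ (a v : Mat D), ‖a‖ ≤ 1 → ‖fderiv ℝ (gradient ξ) a v‖ ≤ L_ξ * ‖v‖ := by
    intro a v ha
    calc ‖fderiv ℝ (gradient ξ) a v‖ ≤ ‖fderiv ℝ (gradient ξ) a‖ * ‖v‖ :=
        ContinuousLinearMap.le_opNorm _ _
      _ ≤ L_ξ * ‖v‖ := mul_le_mul_of_nonneg_right (hH a ha) (norm_nonneg _)
  -- uniform first-order Taylor estimate for ∇ξ on the unit ball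
  have hTaylor : ∀ ε > (0:ℝ), ∃ δ > (0:ℝ), ∀ a b : Mat D, ‖a‖ ≤ 1 → ‖b‖ ≤ 1 → ‖b - a‖ ≤ δ →
      ‖gradient ξ b - gradient ξ a - fderiv ℝ (gradient ξ) a (b - a)‖ ≤ ε * ‖b - a‖ := by
    intro ε hε
    have hUC := (isCompact_closedBall (0 : Mat D) 1).uniformContinuousOn_of_continuous
      hHcont.continuousOn
    rw [Metric.uniformContinuousOn_iff_le] at hUC
    obtain ⟨δ, hδ, hδ'⟩ := hUC ε hε
    refine ⟨δ, hδ, fun a b ha hb hab => ?_⟩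
    have hconv : Convex ℝ (Metric.closedBall a δ ∩ Metric.closedBall (0:Mat D) 1) :=
      (convex_closedBall _ _).inter (convex_closedBall _ _)
    have hamem : a ∈ Metric.closedBall a δ ∩ Metric.closedBall (0:Mat D) 1 :=
      ⟨Metric.mem_closedBall_self hδ.le, by
        simpa [Metric.mem_closedBall, dist_zero_right] using ha⟩
    have hbmem : b ∈ Metric.closedBall a δ ∩ Metric.closedBall (0:Mat D) 1 :=
      ⟨by simpa [Metric.mem_closedBall, dist_eq_norm] using hab, by
        simpa [Metric.mem_closedBall, dist_zero_right] using hb⟩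
    refine hconv.norm_image_sub_le_of_norm_fderiv_le' (fun x _ => hdiffg x) ?_ hamem hbmem
    intro x hx
    have h1 : dist (fderiv ℝ (gradient ξ) x) (fderiv ℝ (gradient ξ) a) ≤ ε := by
      refine hδ' x hx.2 a hamem.2 ?_
      exact Metric.mem_closedBall.1 hx.1
    rwa [dist_eq_norm] at h1
  obtain ⟨hGQ, hG1⟩ := hGmem q hq
  -- pointwise bound for the "Hessian" term
  have hbound : ∀ κ : SPath D, Bdd κ → ∀ s : UI,
      ‖t • fderiv ℝ (gradient ξ) (G q s) (DG q κ s)‖ ≤ t * (L_G * L_ξ) * supN κ := by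
    intro κ hκ s
    obtain ⟨hb, hsup⟩ := hDGbdd q hq κ hκ
    calc ‖t • fderiv ℝ (gradient ξ) (G q s) (DG q κ s)‖
        = t * ‖fderiv ℝ (gradient ξ) (G q s) (DG q κ s)‖ := by
          rw [norm_smul, Real.norm_eq_abs, abs_of_nonneg ht]
      _ ≤ t * (L_ξ * ‖DG q κ s‖) := mul_le_mul_of_nonneg_left (hHapp _ _ (hG1 s)) ht
      _ ≤ t * (L_ξ * supN (DG q κ)) :=
          mul_le_mul_of_nonneg_left (mul_le_mul_of_nonneg_left (le_supN hb s) hLξ.le) ht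
      _ ≤ t * (L_ξ * (L_G * supN κ)) :=
          mul_le_mul_of_nonneg_left (mul_le_mul_of_nonneg_left hsup hLξ.le) ht
      _ = t * (L_G * L_ξ) * supN κ := by ring
  have hpart2 : ∀ κ : SPath D, Bdd κ →
      Bdd ((fun s => κ s - t • fderiv ℝ (gradient ξ) (G q s) (DG q κ s)) : SPath D) ∧
      supN ((fun s => t • fderiv ℝ (gradient ξ) (G q s) (DG q κ s)) : SPath D) ≤
        t * (L_G * L_ξ) * supN κ := by
    intro κ hκ
    refine ⟨bdd_of_le (C := supN κ + t * (L_G * L_ξ) * supN κ) fun s => ?_,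
      supN_le (hbound κ hκ)⟩
    calc ‖κ s - t • fderiv ℝ (gradient ξ) (G q s) (DG q κ s)‖
        ≤ ‖κ s‖ + ‖t • fderiv ℝ (gradient ξ) (G q s) (DG q κ s)‖ := norm_sub_le _ _
      _ ≤ supN κ + t * (L_G * L_ξ) * supN κ := add_le_add (le_supN hκ s) (hbound κ hκ s)
  refine ⟨?_, hpart2, ?_⟩
  · -- Fréchet differentiability
    intro ε hε
    have ht1 : (0:ℝ) < t + 1 := by linarith
    set ε₁ := ε / (2 * (t+1) * L_G) with hε₁
    set ε₂ := ε / (2 * (t+1) * L_ξ) with hε₂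
    have hε₁0 : 0 < ε₁ := by rw [hε₁]; positivity
    have hε₂0 : 0 < ε₂ := by rw [hε₂]; positivity
    obtain ⟨δ₀, hδ₀, hT⟩ := hTaylor ε₁ hε₁0
    obtain ⟨δ₁, hδ₁, hGd⟩ := hGdiff q hq ε₂ hε₂0
    refine ⟨min δ₁ (δ₀ / L_G), by positivity, ?_⟩
    intro q' hq' hqq'
    obtain ⟨hGQ', hG1'⟩ := hGmem q' hq'
    have hd : Bdd (q' - q) := bdd_sub hq'.2 hq.2
    have hsnn : 0 ≤ supN (q' - q) := supN_nonneg hd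
    have hGsub : Bdd (G q' - G q) := bdd_sub (bdd_of_le hG1') (bdd_of_le hG1)
    have hGLip' : supN (G q' - G q) ≤ L_G * supN (q' - q) := hGLip q' hq' q hq
    have hrb : Bdd (G q' - G q - DG q (q' - q)) := bdd_sub hGsub (hDGbdd q hq _ hd).1
    have hrS : supN (G q' - G q - DG q (q' - q)) ≤ ε₂ * supN (q' - q) :=
      hGd q' hq' (hqq'.trans (min_le_left _ _))
    -- the coefficient inequality
    have hco : t * (ε₁ * L_G + L_ξ * ε₂) ≤ ε := by
      have h1 : ε₁ * L_G = ε / (2*(t+1)) := by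
        rw [hε₁]; field_simp
      have h2 : L_ξ * ε₂ = ε / (2*(t+1)) := by
        rw [hε₂]; field_simp
      rw [h1, h2, ← add_div, ← mul_div_assoc, div_le_iff₀ (by positivity)]
      nlinarith [hε.le]
    refine supN_le fun s => ?_
    have hba : ‖G q' s - G q s‖ ≤ L_G * supN (q' - q) := (le_supN hGsub s).trans hGLip'
    have hba' : ‖G q' s - G q s‖ ≤ δ₀ := by
      refine hba.trans ?_
      have h3 : supN (q' - q) ≤ δ₀ / L_G := hqq'.trans (min_le_right _ _)
      calc L_G * supN (q' - q) ≤ L_G * (δ₀ / L_G) := mul_le_mul_of_nonneg_left h3 hLG.le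
        _ = δ₀ := by field_simp
    have hTterm : ‖gradient ξ (G q' s) - gradient ξ (G q s) -
        fderiv ℝ (gradient ξ) (G q s) (G q' s - G q s)‖ ≤ ε₁ * (L_G * supN (q' - q)) :=
      (hT (G q s) (G q' s) (hG1 s) (hG1' s) hba').trans
        (mul_le_mul_of_nonneg_left hba hε₁0.le)
    have hSterm : ‖fderiv ℝ (gradient ξ) (G q s) (G q' s - G q s) -
        fderiv ℝ (gradient ξ) (G q s) (DG q (q' - q) s)‖ ≤
        L_ξ * (ε₂ * supN (q' - q)) := by
      rw [← map_sub]
      refine (hHapp _ _ (hG1 s)).trans (mul_le_mul_of_nonneg_left ?_ hLξ.le)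
      exact (le_supN hrb s).trans hrS
    have hident := char_identity t (q' s) (q s) (gradient ξ (G q s)) (gradient ξ (G q' s))
      (G q' s - G q s) (DG q (q' - q) s)
      (fderiv ℝ (gradient ξ) (G q s) (G q' s - G q s))
      (fderiv ℝ (gradient ξ) (G q s) (DG q (q' - q) s))
    calc ‖(q' s - t • gradient ξ (G q' s)) - (q s - t • gradient ξ (G q s)) -
        ((q' s - q s) - t • fderiv ℝ (gradient ξ) (G q s) (DG q (q' - q) s))‖
        = t * ‖(gradient ξ (G q' s) - gradient ξ (G q s) -
            fderiv ℝ (gradient ξ) (G q s) (G q' s - G q s)) +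
          (fderiv ℝ (gradient ξ) (G q s) (G q' s - G q s) -
            fderiv ℝ (gradient ξ) (G q s) (DG q (q' - q) s))‖ := by
          rw [hident, norm_neg, norm_smul, Real.norm_eq_abs, abs_of_nonneg ht]
      _ ≤ t * (ε₁ * (L_G * supN (q' - q)) + L_ξ * (ε₂ * supN (q' - q))) :=
          mul_le_mul_of_nonneg_left ((norm_add_le _ _).trans (add_le_add hTterm hSterm)) ht
      _ = (t * (ε₁ * L_G + L_ξ * ε₂)) * supN (q' - q) := by ring
      _ ≤ ε * supN (q' - q) := mul_le_mul_of_nonneg_right hco hsnn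
  · -- bijectivity via Neumann series
    intro ht'
    have hprod : 0 < L_G * L_ξ := mul_pos hLG hLξ
    have hclt : t * (L_G * L_ξ) < 1 := by
      have h0 := mul_lt_mul_of_pos_right ht' hprod
      rwa [inv_mul_cancel₀ (ne_of_gt hprod)] at h0
    have hc0 : 0 ≤ t * (L_G * L_ξ) := by positivity
    have hAsub : ∀ κ κ' : SPath D,
        ((fun κ : SPath D => (fun s => t • fderiv ℝ (gradient ξ) (G q s) (DG q κ s) :
            SPath D)) (κ - κ')) =
        (fun s => t • fderiv ℝ (gradient ξ) (G q s) (DG q κ s) : SPath D) -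
        (fun s => t • fderiv ℝ (gradient ξ) (G q s) (DG q κ' s) : SPath D) := by
      intro κ κ'
      funext s
      have h1 : DG q (κ - κ') = DG q κ - DG q κ' := map_sub _ _ _
      show t • fderiv ℝ (gradient ξ) (G q s) (DG q (κ - κ') s) = _
      rw [h1]
      show t • fderiv ℝ (gradient ξ) (G q s) (DG q κ s - DG q κ' s) = _
      rw [map_sub, smul_sub]
      rfl
    have hmain := neumann
      (fun κ : SPath D => (fun s => t • fderiv ℝ (gradient ξ) (G q s) (DG q κ s) : SPath D))
      (t * (L_G * L_ξ)) hc0 hclt hAsub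
      (fun κ hκ => ⟨bdd_of_le (hbound κ hκ), supN_le (hbound κ hκ)⟩)
    exact hmain
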